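/- Let x_0,…,x_n ∈ ℝ^n be affinely independent (so they span an n-simplex) and let a belong to the interior of the convex hull of {x_0,…,x_n}. For each i ∈ {0,…,n} define the infinite cone K_i := { a + Σ_{k≠i} s_k (x_k − a) : s_k ≥ 0 for all k ≠ i } ⊆ ℝ^n. Then ⋃_{i=0}^n K_i = ℝ^n. -/

import Mathlib

/-- The infinite cone `K_i = { a + Σ_{k≠i} s_k (x_k − a) : s_k ≥ 0 }` over the `i`-th
facet of the simplex `[x_0,…,x_n]`, with apex `a`. -/
def facetCone (n : ℕ) (x : Fin (n + 1) → (Fin n → ℝ)) (a : Fin n → ℝ)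
    (i : Fin (n + 1)) : Set (Fin n → ℝ) :=
  { p | ∃ s : Fin (n + 1) → ℝ, (∀ k, k ≠ i → 0 ≤ s k) ∧
      p = a + ∑ k ∈ Finset.univ.erase i, s k • (x k - a) }

/-- if `a` lies in the interior of the simplex `[x_0,…,x_n]`, the
infinite cones over its facets cover all of `ℝ^n`. -/
theorem stmt8 (n : ℕ) (x : Fin (n + 1) → (Fin n → ℝ)) (a : Fin n → ℝ)
    (hx : AffineIndependent ℝ x)
    (ha : a ∈ interior (convexHull ℝ (Set.range x))) :
    (⋃ i, facetCone n x a i) = Set.univ := by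
  classical
  have hspan : affineSpan ℝ (Set.range x) = ⊤ := by
    rw [hx.affineSpan_eq_top_iff_card_eq_finrank_add_one]
    simp
  let b : AffineBasis (Fin (n + 1)) ℝ (Fin n → ℝ) := ⟨x, hx, hspan⟩
  have hbx : ⇑b = x := rfl
  have hpos : ∀ i, 0 < b.coord i a := by
    rw [← hbx] at ha
    rw [b.interior_convexHull] at ha
    exact ha
  set t : Fin (n + 1) → ℝ := fun i => b.coord i a with ht
  have hta : ∑ i, t i • x i = a := by
    have := b.linear_combination_coord_eq_self a
    rwa [hbx] at this
  have hts : ∑ i, t i = 1 := b.sum_coord_apply_eq_one a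
  -- key: Σ t i • (x i - a) = 0
  have hzero : ∑ i, t i • (x i - a) = 0 := by
    simp only [smul_sub, Finset.sum_sub_distrib, hta, ← Finset.sum_smul, hts, one_smul, sub_self]
  ext p
  simp only [Set.mem_iUnion, Set.mem_univ, iff_true]
  set c : Fin (n + 1) → ℝ := fun i => b.coord i p with hc
  have hcp : ∑ i, c i • x i = p := by
    have := b.linear_combination_coord_eq_self p
    rwa [hbx] at this
  have hcs : ∑ i, c i = 1 := b.sum_coord_apply_eq_one p
  have hrep : ∑ i, (c i - t i) • (x i - a) = p - a := by
    have h1 : ∑ i, (c i - t i) • x i = p - a := by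
      simp only [sub_smul, Finset.sum_sub_distrib, hcp, hta]
    have hsum0 : ∑ i, (c i - t i) = 0 := by
      rw [Finset.sum_sub_distrib, hcs, hts, sub_self]
    have h2 : ∑ i, (c i - t i) • (x i - a)
        = ∑ i, (c i - t i) • x i - (∑ i, (c i - t i)) • a := by
      rw [Finset.sum_smul]
      simp only [smul_sub, Finset.sum_sub_distrib]
    rw [h2, h1, hsum0, zero_smul, sub_zero]
  -- choose i minimizing d k = (c k - t k) / t k
  set d : Fin (n + 1) → ℝ := fun k => (c k - t k) / t k with hd
  obtain ⟨i, -, hi⟩ := Finset.exists_min_image Finset.univ d ⟨0, Finset.mem_univ 0⟩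
  refine ⟨i, fun k => t k * (d k - d i), fun k _ => ?_, ?_⟩
  · exact mul_nonneg (hpos k).le (sub_nonneg.2 (hi k (Finset.mem_univ k)))
  · have hsi : t i * (d i - d i) = 0 := by ring
    have hfull : ∑ k, (t k * (d k - d i)) • (x k - a) = p - a := by
      have hck : ∀ k, t k * (d k - d i) = (c k - t k) - d i * t k := by
        intro k
        have : t k * d k = c k - t k := by
          rw [hd]; field_simp [show t k ≠ 0 from (hpos k).ne']
        ring_nf
        ring_nf at this
        linarith [this]
      calc ∑ k, (t k * (d k - d i)) • (x k - a)
          = ∑ k, ((c k - t k) • (x k - a) - (d i * t k) • (x k - a)) := by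
            refine Finset.sum_congr rfl fun k _ => ?_
            rw [hck k, sub_smul]
        _ = (∑ k, (c k - t k) • (x k - a)) - d i • (∑ k, t k • (x k - a)) := by
            rw [Finset.sum_sub_distrib, Finset.smul_sum]
            congr 1
            exact Finset.sum_congr rfl fun k _ => by rw [smul_smul]
        _ = p - a := by rw [hrep, hzero, smul_zero, sub_zero]
    have herase : ∑ k ∈ Finset.univ.erase i, (t k * (d k - d i)) • (x k - a)
        = ∑ k, (t k * (d k - d i)) • (x k - a) := by
      rw [Finset.sum_erase_eq_sub (Finset.mem_univ i), hsi, zero_smul, sub_zero]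
    rw [herase, hfull]
    abel
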